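/- Let G be a graph and G' be obtained from G by adding, for each pair of vertices u,v of G, an independent set I_{uv} of n new vertices each adjacent exactly to u and v, where n = |V(G)|. Then mmfvs(G') ≥ (n-1)·C(α(G),2), where α(G) is the independence number of G and C(m,2) = m(m-1)/2. -/

import Mathlib

open SimpleGraph

def IsFVS {V : Type*} (G : SimpleGraph V) (S : Set V) : Prop :=
  (G.induce Sᶜ).IsAcyclic

def IsMinFVS {V : Type*} (G : SimpleGraph V) (S : Set V) : Prop :=
  IsFVS G S ∧ ∀ T : Set V, T ⊂ S → ¬ IsFVS G T

noncomputable def mmfvs {V : Type*} (G : SimpleGraph V) : ℕ :=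
  sSup {k | ∃ S : Set V, IsMinFVS G S ∧ S.ncard = k}

def IsIndep {V : Type*} (G : SimpleGraph V) (S : Set V) : Prop :=
  ∀ a ∈ S, ∀ b ∈ S, ¬ G.Adj a b

/-- The independence number of `G`. -/
noncomputable def alphaNum {V : Type*} (G : SimpleGraph V) : ℕ :=
  sSup {k | ∃ S : Set V, IsIndep G S ∧ S.ncard = k}

/-- `G` together with, for each unordered pair `{u,v}` of distinct vertices,
an independent set of `n` new vertices each adjacent exactly to `u` and `v`. -/
def pairBlowup {V : Type*} (G : SimpleGraph V) (n : ℕ) :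
    SimpleGraph (V ⊕ ({e : Sym2 V // ¬ e.IsDiag} × Fin n)) where
  Adj x y :=
    match x, y with
    | Sum.inl a, Sum.inl b => G.Adj a b
    | Sum.inl a, Sum.inr (e, _) => a ∈ e.1
    | Sum.inr (e, _), Sum.inl a => a ∈ e.1
    | Sum.inr _, Sum.inr _ => False
  symm := ⟨by rintro (a | e) (b | f) h <;> simp_all [SimpleGraph.adj_comm]⟩
  loopless := ⟨by rintro (a | e) <;> simp⟩

namespace MMFVSAux

variable {V : Type*}

section
variable {U : Type*} {H : SimpleGraph U}

lemma cycle_two_nbrs {x v : U} {p : H.Walk x x}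
    (hp : p.IsCycle) (hv : v ∈ p.support) :
    ∃ a b, a ≠ b ∧ H.Adj v a ∧ H.Adj v b ∧ a ∈ p.support ∧ b ∈ p.support := by
  classical
  have hq : (p.rotate v hv).IsCycle := hp.rotate hv
  set q := p.rotate v hv with hqdef
  have hmem : ∀ z, z ∈ q.support.tail → z ∈ p.support := by
    intro z hz
    have := (Walk.support_rotate p v hv).mem_iff.mp hz
    exact List.mem_of_mem_tail this
  obtain ⟨u, h, q', hq'⟩ := Walk.not_nil_iff.mp hq.not_nil
  rw [hq'] at hq
  obtain ⟨hpath, hedge⟩ := (Walk.cons_isCycle_iff q' h).mp hq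
  have hq'nn : ¬ q'.Nil := by
    have h3 := hq.three_le_length
    rw [Walk.not_nil_iff_lt_length]
    simp only [Walk.length_cons] at h3
    omega
  obtain ⟨u2, h2, q2, hq2⟩ := Walk.not_nil_iff.mp hq'nn
  obtain ⟨y, r, h', hcc⟩ := Walk.exists_cons_eq_concat h2 q2
  rw [← hq2] at hcc
  have hyedge : s(y, v) ∈ q'.edges := by
    rw [hcc, Walk.edges_concat]
    simp
  have huy : u ≠ y := by
    rintro rfl
    exact hedge (by rwa [Sym2.eq_swap] at hyedge)
  have husup : u ∈ p.support := by
    apply hmem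
    rw [hq']
    simpa using Walk.start_mem_support q'
  have hysup : y ∈ p.support := by
    apply hmem
    rw [hq']
    simp only [Walk.support_cons, List.tail_cons]
    exact Walk.fst_mem_support_of_mem_edges q' hyedge
  exact ⟨u, y, huy, h, h'.symm, husup, hysup⟩

end

section
variable {U : Type*} {H : SimpleGraph U}

lemma two_paths_notAcyclic {u v m₁ m₂ : U} (hm : m₁ ≠ m₂) (huv : u ≠ v)
    (h1 : H.Adj u m₁) (h2 : H.Adj m₁ v) (h3 : H.Adj u m₂) (h4 : H.Adj m₂ v) :
    ¬ H.IsAcyclic := by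
  intro hac
  have hp1 : (Walk.cons h1 (Walk.cons h2 Walk.nil)).IsPath := by
    simp [Walk.isPath_def, h1.ne, h2.ne, huv]
  have hp2 : (Walk.cons h3 (Walk.cons h4 Walk.nil)).IsPath := by
    simp [Walk.isPath_def, h3.ne, h4.ne, huv]
  have := hac.path_unique ⟨_, hp1⟩ ⟨_, hp2⟩
  have hsupp := congrArg (fun q : H.Path u v => q.1.support) this
  simp only [Walk.support_cons, Walk.support_nil] at hsupp
  exact hm (by injection (List.cons.inj hsupp).2 with h _ )

lemma two_four_notAcyclic {u v m m₁ c m₂ : U}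
    (h1 : H.Adj u m) (h2 : H.Adj m v)
    (g1 : H.Adj u m₁) (g2 : H.Adj m₁ c) (g3 : H.Adj c m₂) (g4 : H.Adj m₂ v)
    (huv : u ≠ v) (hmv : m ≠ v) (huc : u ≠ c) (hum₂ : u ≠ m₂) (hm₁m₂ : m₁ ≠ m₂)
    (hm₁v : m₁ ≠ v) (hcv : c ≠ v) :
    ¬ H.IsAcyclic := by
  intro hac
  have hp1 : (Walk.cons h1 (Walk.cons h2 Walk.nil)).IsPath := by
    simp [Walk.isPath_def, h1.ne, hmv, huv]
  have hp2 : (Walk.cons g1 (Walk.cons g2 (Walk.cons g3 (Walk.cons g4 Walk.nil)))).IsPath := by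
    simp [Walk.isPath_def, g1.ne, g2.ne, g3.ne, g4.ne, huv, huc, hum₂, hm₁m₂, hm₁v, hcv]
  have := hac.path_unique ⟨_, hp1⟩ ⟨_, hp2⟩
  have hlen := congrArg (fun q : H.Path u v => q.1.length) this
  simp [Walk.length_cons] at hlen

end

@[simp] lemma pb_adj_ll {G : SimpleGraph V} {n a b} :
    (pairBlowup G n).Adj (Sum.inl a) (Sum.inl b) ↔ G.Adj a b := Iff.rfl

@[simp] lemma pb_adj_lr {G : SimpleGraph V} {n a} {e : {e : Sym2 V // ¬ e.IsDiag}} {i : Fin n} :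
    (pairBlowup G n).Adj (Sum.inl a) (Sum.inr (e, i)) ↔ a ∈ e.1 := Iff.rfl

@[simp] lemma pb_adj_rl {G : SimpleGraph V} {n a} {e : {e : Sym2 V // ¬ e.IsDiag}} {i : Fin n} :
    (pairBlowup G n).Adj (Sum.inr (e, i)) (Sum.inl a) ↔ a ∈ e.1 := Iff.rfl

@[simp] lemma pb_adj_rr {G : SimpleGraph V} {n} {e f : {e : Sym2 V // ¬ e.IsDiag}} {i j : Fin n} :
    ¬ (pairBlowup G n).Adj (Sum.inr (e, i)) (Sum.inr (f, j)) := fun h => h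

def Sset (A : Set V) (a₀ : V) (n : ℕ) : Set (V ⊕ ({e : Sym2 V // ¬ e.IsDiag} × Fin n)) :=
  fun w => match w with
  | Sum.inl v => v ∉ A
  | Sum.inr (e, i) => (∀ x ∈ e.1, x ∈ A) ∧ ¬(a₀ ∈ e.1 ∧ i.val = 0)

@[simp] lemma mem_Sset_inl {A : Set V} {a₀ n v} : Sum.inl v ∈ Sset A a₀ n ↔ v ∉ A := Iff.rfl

@[simp] lemma mem_Sset_inr {A : Set V} {a₀ n} {e : {e : Sym2 V // ¬ e.IsDiag}} {i : Fin n} :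
    Sum.inr (e, i) ∈ Sset A a₀ n ↔ (∀ x ∈ e.1, x ∈ A) ∧ ¬(a₀ ∈ e.1 ∧ i.val = 0) := Iff.rfl

lemma compl_inl {A : Set V} {a₀ n v} : Sum.inl v ∈ (Sset A a₀ n)ᶜ ↔ v ∈ A := by
  simp [Sset]

lemma compl_inr {A : Set V} {a₀ n} {e : {e : Sym2 V // ¬ e.IsDiag}} {i : Fin n} :
    Sum.inr (e, i) ∈ (Sset A a₀ n)ᶜ ↔ ¬(∀ x ∈ e.1, x ∈ A) ∨ (a₀ ∈ e.1 ∧ i.val = 0) := by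
  simp only [Set.mem_compl_iff, mem_Sset_inr]
  tauto


variable {G : SimpleGraph V} {A : Set V} {a₀ : V} {n : ℕ}

/-- Induced adjacency unfolds to pairBlowup adjacency on values. -/
lemma induce_adj_val {T : Set (V ⊕ ({e : Sym2 V // ¬ e.IsDiag} × Fin n))}
    {x y : ↥Tᶜ} (h : ((pairBlowup G n).induce Tᶜ).Adj x y) :
    (pairBlowup G n).Adj x.val y.val := h

/-- Any `inr` vertex on a cycle of the complement of `Sset` is a "star" vertex. -/
lemma key_inr {x : ↥(Sset A a₀ n)ᶜ} {p : ((pairBlowup G n).induce (Sset A a₀ n)ᶜ).Walk x x}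
    (hp : p.IsCycle) {y : ↥(Sset A a₀ n)ᶜ} (hy : y ∈ p.support)
    {e : {e : Sym2 V // ¬ e.IsDiag}} {i : Fin n} (hyv : y.val = Sum.inr (e, i)) :
    ∃ b ∈ A, b ≠ a₀ ∧ e.1 = s(a₀, b) ∧ i.val = 0 := by
  obtain ⟨a, b, hab, ha, hb, _, _⟩ := cycle_two_nbrs hp hy
  have ha' := induce_adj_val ha
  have hb' := induce_adj_val hb
  rw [hyv] at ha' hb'
  -- a and b must be inl vertices
  obtain ⟨m₁, ham⟩ : ∃ m, a.val = Sum.inl m := by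
    rcases hav : a.val with m | ⟨f, j⟩
    · exact ⟨m, rfl⟩
    · rw [hav] at ha'; exact absurd ha' pb_adj_rr
  obtain ⟨m₂, hbm⟩ : ∃ m, b.val = Sum.inl m := by
    rcases hbv : b.val with m | ⟨f, j⟩
    · exact ⟨m, rfl⟩
    · rw [hbv] at hb'; exact absurd hb' pb_adj_rr
  rw [ham] at ha'
  rw [hbm] at hb'
  have hm₁e : m₁ ∈ e.1 := ha'
  have hm₂e : m₂ ∈ e.1 := hb'
  have hm₁A : m₁ ∈ A := compl_inl.mp (ham ▸ a.2)
  have hm₂A : m₂ ∈ A := compl_inl.mp (hbm ▸ b.2)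
  have hm : m₁ ≠ m₂ := by
    intro hmm
    exact hab (Subtype.ext (by rw [ham, hbm, hmm]))
  obtain ⟨u, w, hew⟩ : ∃ u w, e.1 = s(u, w) := Sym2.ind (fun u w => ⟨u, w, rfl⟩) e.1
  rw [hew, Sym2.mem_iff] at hm₁e hm₂e
  have hneq : u ≠ w := by
    intro h
    exact e.2 (hew ▸ (Sym2.mk_isDiag_iff.mpr h))
  have huA : u ∈ A ∧ w ∈ A := by
    rcases hm₁e with rfl | rfl <;> rcases hm₂e with rfl | rfl
    · exact absurd rfl hm
    · exact ⟨hm₁A, hm₂A⟩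
    · exact ⟨hm₂A, hm₁A⟩
    · exact absurd rfl hm
  have hall : ∀ x ∈ e.1, x ∈ A := by
    intro z hz
    rw [hew, Sym2.mem_iff] at hz
    rcases hz with rfl | rfl
    · exact huA.1
    · exact huA.2
  have hsurv := compl_inr.mp (hyv ▸ y.2)
  rcases hsurv with hns | ⟨ha₀e, hi0⟩
  · exact absurd hall hns
  · rw [hew, Sym2.mem_iff] at ha₀e
    rcases ha₀e with rfl | rfl
    · exact ⟨w, huA.2, fun h => hneq h.symm, hew, hi0⟩
    · exact ⟨u, huA.1, hneq, by rw [hew, Sym2.eq_swap], hi0⟩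

lemma Sset_acyclic (hind : IsIndep G A) :
    ((pairBlowup G n).induce (Sset A a₀ n)ᶜ).IsAcyclic := by
  intro x p hp
  -- no inl-inl adjacency among surviving vertices
  have noll : ∀ (c d : ↥(Sset A a₀ n)ᶜ), ((pairBlowup G n).induce (Sset A a₀ n)ᶜ).Adj c d →
      ∀ v m, c.val = Sum.inl v → d.val = Sum.inl m → False := by
    intro c d hcd v m hcv hdv
    have h' := induce_adj_val hcd
    rw [hcv, hdv] at h'
    exact hind v (compl_inl.mp (hcv ▸ c.2)) m (compl_inl.mp (hdv ▸ d.2)) h'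
  -- find an inr vertex on the cycle
  obtain ⟨y, hy, e, i, hyv⟩ :
      ∃ y ∈ p.support, ∃ (e : {e : Sym2 V // ¬ e.IsDiag}) (i : Fin n),
        y.val = Sum.inr (e, i) := by
    rcases hxv : x.val with v | ⟨e, i⟩
    · obtain ⟨a, b, hab, ha, hb, has, hbs⟩ := cycle_two_nbrs hp p.start_mem_support
      rcases hav : a.val with m | ⟨e, i⟩
      · exact (noll x a ha v m hxv hav).elim
      · exact ⟨a, has, e, i, hav⟩
    · exact ⟨x, p.start_mem_support, e, i, hxv⟩
  obtain ⟨b₀, hb₀A, hb₀ne, he, hi⟩ := key_inr hp hy hyv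
  -- the non-center endpoint b₀ is on the cycle
  obtain ⟨c, hcs, hcv⟩ : ∃ c ∈ p.support, c.val = Sum.inl b₀ := by
    obtain ⟨a, b, hab, ha, hb, has, hbs⟩ := cycle_two_nbrs hp hy
    have ha' := induce_adj_val ha
    have hb' := induce_adj_val hb
    rw [hyv] at ha' hb'
    obtain ⟨m₁, ham⟩ : ∃ m, a.val = Sum.inl m := by
      rcases hav : a.val with m | ⟨f, j⟩
      · exact ⟨m, rfl⟩
      · rw [hav] at ha'; exact absurd ha' pb_adj_rr
    obtain ⟨m₂, hbm⟩ : ∃ m, b.val = Sum.inl m := by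
      rcases hbv : b.val with m | ⟨f, j⟩
      · exact ⟨m, rfl⟩
      · rw [hbv] at hb'; exact absurd hb' pb_adj_rr
    rw [ham] at ha'
    rw [hbm] at hb'
    have hm₁e : m₁ ∈ e.1 := ha'
    have hm₂e : m₂ ∈ e.1 := hb'
    rw [he, Sym2.mem_iff] at hm₁e hm₂e
    have hm : m₁ ≠ m₂ := fun hmm => hab (Subtype.ext (by rw [ham, hbm, hmm]))
    rcases hm₁e with rfl | rfl
    · rcases hm₂e with rfl | rfl
      · exact absurd rfl hm
      · exact ⟨b, hbs, hbm⟩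
    · exact ⟨a, has, ham⟩
  -- both cycle-neighbors of c are the unique star vertex: contradiction
  obtain ⟨d₁, d₂, hd, h1, h2, hs1, hs2⟩ := cycle_two_nbrs hp hcs
  have hstar : ∀ d, ((pairBlowup G n).induce (Sset A a₀ n)ᶜ).Adj c d → d ∈ p.support →
      ∃ (f : {e : Sym2 V // ¬ e.IsDiag}) (j : Fin n),
        d.val = Sum.inr (f, j) ∧ f.1 = s(a₀, b₀) ∧ j.val = 0 := by
    intro d hcd hds
    obtain ⟨f, j, hdv⟩ : ∃ f j, d.val = Sum.inr (f, j) := by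
      rcases hdv2 : d.val with m | ⟨f, j⟩
      · exact (noll c d hcd b₀ m hcv hdv2).elim
      · exact ⟨f, j, rfl⟩
    obtain ⟨b', hb'A, hb'ne, hf, hj⟩ := key_inr hp hds hdv
    have hcd' := induce_adj_val hcd
    rw [hcv, hdv] at hcd'
    have hb₀f : b₀ ∈ f.1 := hcd'
    rw [hf, Sym2.mem_iff] at hb₀f
    rcases hb₀f with h | h
    · exact absurd h hb₀ne
    · exact ⟨f, j, hdv, by rw [hf, h], hj⟩
  obtain ⟨f₁, j₁, hv1, hf1, hj1⟩ := hstar d₁ h1 hs1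
  obtain ⟨f₂, j₂, hv2, hf2, hj2⟩ := hstar d₂ h2 hs2
  apply hd
  apply Subtype.ext
  rw [hv1, hv2]
  have : f₁ = f₂ := Subtype.ext (by rw [hf1, hf2])
  have hj : j₁ = j₂ := Fin.ext (by rw [hj1, hj2])
  rw [this, hj]


lemma induce_adj_of_val {T : Set (V ⊕ ({e : Sym2 V // ¬ e.IsDiag} × Fin n))}
    {x y : ↥Tᶜ} (h : (pairBlowup G n).Adj x.val y.val) :
    ((pairBlowup G n).induce Tᶜ).Adj x y := h

lemma Sset_min (ha₀ : a₀ ∈ A) (hn : 2 ≤ n)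
    {T : Set (V ⊕ ({e : Sym2 V // ¬ e.IsDiag} × Fin n))} (hT : T ⊂ Sset A a₀ n) :
    ¬ IsFVS (pairBlowup G n) T := by
  obtain ⟨s, hsS, hsT⟩ := Set.exists_of_ssubset hT
  have hST : ∀ w ∈ (Sset A a₀ n)ᶜ, w ∈ Tᶜ := fun w hw hwT => hw (hT.subset hwT)
  intro hfvs
  have hac : ((pairBlowup G n).induce Tᶜ).IsAcyclic := hfvs
  have hn0 : (0 : ℕ) < n := by omega
  have hn1 : (1 : ℕ) < n := hn
  rcases s with w | ⟨e, i⟩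
  · -- deleted original vertex w ∉ A : two parallel paths w - I_{w a₀} - a₀
    have hw : w ∉ A := mem_Sset_inl.mp hsS
    have hwa : w ≠ a₀ := fun h => hw (h ▸ ha₀)
    have hnd : ¬ (s(w, a₀) : Sym2 V).IsDiag := by simp [hwa]
    set ed : {e : Sym2 V // ¬ e.IsDiag} := ⟨s(w, a₀), hnd⟩ with hed
    have hmem : ∀ j : Fin n, Sum.inr (ed, j) ∈ (Sset A a₀ n)ᶜ := by
      intro j hj
      exact hw ((hj.1 w) (Sym2.mem_mk_left w a₀))
    refine absurd hac (two_paths_notAcyclic (H := (pairBlowup G n).induce Tᶜ)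
      (u := ⟨Sum.inl w, fun h => hsT h⟩)
      (v := ⟨Sum.inl a₀, hST _ (compl_inl.mpr ha₀)⟩)
      (m₁ := ⟨Sum.inr (ed, ⟨0, hn0⟩), hST _ (hmem _)⟩)
      (m₂ := ⟨Sum.inr (ed, ⟨1, hn1⟩), hST _ (hmem _)⟩) ?_ ?_ ?_ ?_ ?_ ?_)
    · exact fun h => by simp [Subtype.ext_iff, Fin.ext_iff] at h
    · exact fun h => hwa (by simpa [Subtype.ext_iff] using h)
    · exact induce_adj_of_val (by simp [hed])
    · exact induce_adj_of_val (by simp [hed])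
    · exact induce_adj_of_val (by simp [hed])
    · exact induce_adj_of_val (by simp [hed])
  · -- deleted subdivision vertex
    obtain ⟨hall, hnot⟩ : (∀ x ∈ e.1, x ∈ A) ∧ ¬(a₀ ∈ e.1 ∧ i.val = 0) := hsS
    obtain ⟨u, v, hew⟩ : ∃ u v, e.1 = s(u, v) := Sym2.ind (fun u w => ⟨u, w, rfl⟩) e.1
    have huv : u ≠ v := fun h => e.2 (hew ▸ (Sym2.mk_isDiag_iff.mpr h))
    have huA : u ∈ A := hall u (hew ▸ Sym2.mem_mk_left u v)
    have hvA : v ∈ A := hall v (hew ▸ Sym2.mem_mk_right u v)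
    have hsTc : Sum.inr (e, i) ∈ Tᶜ := fun h => hsT h
    by_cases ha₀e : a₀ ∈ e.1
    · -- star pair : i ≠ 0, two parallel copies
      have hi : i.val ≠ 0 := fun h => hnot ⟨ha₀e, h⟩
      -- find b with e = s(a₀, b)
      obtain ⟨b, hbA, hba, heb⟩ : ∃ b, b ∈ A ∧ b ≠ a₀ ∧ e.1 = s(a₀, b) := by
        rw [hew, Sym2.mem_iff] at ha₀e
        rcases ha₀e with rfl | rfl
        · exact ⟨v, hvA, fun h => huv h.symm, hew⟩
        · exact ⟨u, huA, huv, by rw [hew, Sym2.eq_swap]⟩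
      have hmem0 : Sum.inr (e, (⟨0, hn0⟩ : Fin n)) ∈ (Sset A a₀ n)ᶜ := by
        intro hj
        exact hj.2 ⟨ha₀e, rfl⟩
      refine absurd hac (two_paths_notAcyclic (H := (pairBlowup G n).induce Tᶜ)
        (u := ⟨Sum.inl a₀, hST _ (compl_inl.mpr ha₀)⟩)
        (v := ⟨Sum.inl b, hST _ (compl_inl.mpr hbA)⟩)
        (m₁ := ⟨Sum.inr (e, ⟨0, hn0⟩), hST _ hmem0⟩)
        (m₂ := ⟨Sum.inr (e, i), hsTc⟩) ?_ ?_ ?_ ?_ ?_ ?_)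
      · exact fun h => hi (by
          have := congrArg Subtype.val h
          simp only [Sum.inr.injEq, Prod.mk.injEq] at this
          exact (congrArg Fin.val this.2).symm ▸ rfl)
      · exact fun h => hba (by
          have := congrArg Subtype.val h
          simp only [Sum.inl.injEq] at this
          exact this.symm)
      · exact induce_adj_of_val (by simp [heb])
      · exact induce_adj_of_val (by simp [heb])
      · exact induce_adj_of_val (by simp [heb])
      · exact induce_adj_of_val (by simp [heb])
    · -- non-star pair : 2-path u -(e,i)- v versus 4-path u - a₀ - v through star copies
      have hua : u ≠ a₀ := fun h => ha₀e (hew ▸ (h ▸ Sym2.mem_mk_left u v))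
      have hva : v ≠ a₀ := fun h => ha₀e (hew ▸ (h ▸ Sym2.mem_mk_right u v))
      have hndu : ¬ (s(a₀, u) : Sym2 V).IsDiag := by simp [Ne.symm hua]
      have hndv : ¬ (s(a₀, v) : Sym2 V).IsDiag := by simp [Ne.symm hva]
      set Eu : {e : Sym2 V // ¬ e.IsDiag} := ⟨s(a₀, u), hndu⟩ with hEu
      set Ev : {e : Sym2 V // ¬ e.IsDiag} := ⟨s(a₀, v), hndv⟩ with hEv
      have hmemu : Sum.inr (Eu, (⟨0, hn0⟩ : Fin n)) ∈ (Sset A a₀ n)ᶜ := by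
        intro hj
        exact hj.2 ⟨Sym2.mem_mk_left a₀ u, rfl⟩
      have hmemv : Sum.inr (Ev, (⟨0, hn0⟩ : Fin n)) ∈ (Sset A a₀ n)ᶜ := by
        intro hj
        exact hj.2 ⟨Sym2.mem_mk_left a₀ v, rfl⟩
      refine absurd hac (two_four_notAcyclic (H := (pairBlowup G n).induce Tᶜ)
        (u := ⟨Sum.inl u, hST _ (compl_inl.mpr huA)⟩)
        (v := ⟨Sum.inl v, hST _ (compl_inl.mpr hvA)⟩)
        (m := ⟨Sum.inr (e, i), hsTc⟩)
        (m₁ := ⟨Sum.inr (Eu, ⟨0, hn0⟩), hST _ hmemu⟩)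
        (c := ⟨Sum.inl a₀, hST _ (compl_inl.mpr ha₀)⟩)
        (m₂ := ⟨Sum.inr (Ev, ⟨0, hn0⟩), hST _ hmemv⟩)
        ?_ ?_ ?_ ?_ ?_ ?_ ?_ ?_ ?_ ?_ ?_ ?_ ?_)
      · exact induce_adj_of_val (by simp [hew])
      · exact induce_adj_of_val (by simp [hew])
      · exact induce_adj_of_val (by simp [hEu])
      · exact induce_adj_of_val (by simp [hEu])
      · exact induce_adj_of_val (by simp [hEv])
      · exact induce_adj_of_val (by simp [hEv])
      · exact fun h => huv (by simpa [Subtype.ext_iff] using h)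
      · exact fun h => by simp [Subtype.ext_iff] at h
      · exact fun h => hua (by simpa [Subtype.ext_iff] using h)
      · exact fun h => by simp [Subtype.ext_iff] at h
      · exact fun h => huv (by
          simp only [Subtype.ext_iff, Sum.inr.injEq, Prod.mk.injEq, hEu, hEv,
            Subtype.mk.injEq, Sym2.congr_right] at h
          exact h.1)
      · exact fun h => by simp [Subtype.ext_iff] at h
      · exact fun h => hva (by simpa [Subtype.ext_iff, eq_comm] using h)
  done


lemma Sset_ncard_ge [Finite V] {A : Set V} {a₀ : V} {n : ℕ} :
    (n - 1) * (A.ncard).choose 2 ≤ (Sset A a₀ n).ncard := by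
  classical
  haveI : Fintype V := Fintype.ofFinite V
  -- the injection
  have hmapinj : Function.Injective (Sym2.map (Subtype.val : ↥A → V)) :=
    Sym2.map.injective Subtype.val_injective
  set f : ({z : Sym2 ↥A // ¬ z.IsDiag} × Fin (n - 1)) →
      (V ⊕ ({e : Sym2 V // ¬ e.IsDiag} × Fin n)) := fun zi =>
    Sum.inr (⟨zi.1.1.map Subtype.val, by
        rw [Sym2.isDiag_map Subtype.val_injective]; exact zi.1.2⟩,
      ⟨zi.2.val + 1, by have := zi.2.isLt; omega⟩) with hf
  have hinj : Function.Injective f := by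
    rintro ⟨z1, i1⟩ ⟨z2, i2⟩ h
    simp only [hf, Sum.inr.injEq, Prod.mk.injEq, Subtype.mk.injEq, Fin.mk.injEq] at h
    have h1 : z1 = z2 := Subtype.ext (hmapinj h.1)
    have h2 : i1 = i2 := Fin.ext (by omega)
    rw [h1, h2]
  have hrange : Set.range f ⊆ Sset A a₀ n := by
    rintro w ⟨⟨z, i⟩, rfl⟩
    simp only [hf]
    constructor
    · intro x hx
      rw [Sym2.mem_map] at hx
      obtain ⟨a, _, rfl⟩ := hx
      exact a.2
    · rintro ⟨-, h0⟩
      simp at h0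
  calc (n - 1) * (A.ncard).choose 2
      = Nat.card ({z : Sym2 ↥A // ¬ z.IsDiag} × Fin (n - 1)) := by
        rw [Nat.card_prod, Nat.card_eq_fintype_card, Nat.card_eq_fintype_card,
          Sym2.card_subtype_not_diag, Fintype.card_fin]
        rw [← Nat.card_eq_fintype_card, Nat.card_coe_set_eq]
        ring
    _ = (Set.range f).ncard := by
        rw [← Nat.card_coe_set_eq, Nat.card_range_of_injective hinj]
    _ ≤ (Sset A a₀ n).ncard := Set.ncard_le_ncard hrange (Set.toFinite _)

end MMFVSAux

open MMFVSAux in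
theorem mmfvs_pairBlowup_lower_bound {V : Type*} [Fintype V] (G : SimpleGraph V) :
    (Fintype.card V - 1) * (alphaNum G).choose 2 ≤
      mmfvs (pairBlowup G (Fintype.card V)) := by
  classical
  set n := Fintype.card V with hn
  by_cases hα : alphaNum G < 2
  · rw [Nat.choose_eq_zero_of_lt hα, mul_zero]
    exact Nat.zero_le _
  push_neg at hα
  -- obtain a maximum independent set
  have hbddK : BddAbove {k | ∃ S : Set V, IsIndep G S ∧ S.ncard = k} := by
    refine ⟨n, ?_⟩
    rintro k ⟨S, -, rfl⟩
    calc S.ncard ≤ (Set.univ : Set V).ncard :=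
          Set.ncard_le_ncard (Set.subset_univ S) (Set.toFinite _)
      _ = n := by rw [Set.ncard_univ, Nat.card_eq_fintype_card]
  have hne : {k | ∃ S : Set V, IsIndep G S ∧ S.ncard = k}.Nonempty :=
    ⟨0, ∅, fun a ha => absurd ha (Set.notMem_empty a), Set.ncard_empty _⟩
  have hmem := Nat.sSup_mem hne hbddK
  obtain ⟨A, hAind, hAcard⟩ := hmem
  have hA2 : 2 ≤ A.ncard := hAcard ▸ hα
  obtain ⟨a₀, ha₀⟩ : A.Nonempty := Set.nonempty_of_ncard_ne_zero (by omega)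
  have hn2 : 2 ≤ n := by
    calc 2 ≤ A.ncard := hA2
      _ ≤ (Set.univ : Set V).ncard := Set.ncard_le_ncard (Set.subset_univ A) (Set.toFinite _)
      _ = n := by rw [Set.ncard_univ, Nat.card_eq_fintype_card]
  have hmin : IsMinFVS (pairBlowup G n) (Sset A a₀ n) :=
    ⟨Sset_acyclic hAind, fun T hT => Sset_min ha₀ hn2 hT⟩
  have hbddM : BddAbove {k | ∃ S, IsMinFVS (pairBlowup G n) S ∧ S.ncard = k} := by
    refine ⟨(Set.univ : Set (V ⊕ ({e : Sym2 V // ¬ e.IsDiag} × Fin n))).ncard, ?_⟩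
    rintro k ⟨S, -, rfl⟩
    exact Set.ncard_le_ncard (Set.subset_univ S) (Set.toFinite _)
  calc (n - 1) * (alphaNum G).choose 2
      = (n - 1) * (A.ncard).choose 2 := by rw [hAcard, alphaNum]
    _ ≤ (Sset A a₀ n).ncard := Sset_ncard_ge
    _ ≤ mmfvs (pairBlowup G n) := le_csSup hbddM ⟨Sset A a₀ n, hmin, rfl⟩
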